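/- ∫_{ℝ²} ((|x|²-1)/(1+|x|²)³) · η₀(x)³ dx = -21π/4, where η₀(x) = -ln(1+|x|²). -/

import Mathlib

open MeasureTheory Real Set Filter Topology

noncomputable section

abbrev E2 := EuclideanSpace ℝ (Fin 2)

/-- The standard Liouville bubble `η₀(x) = -ln(1+|x|²)`. -/
def eta0 (x : E2) : ℝ := -Real.log (1 + ‖x‖^2)

/-- antiderivative pieces -/
def Hfun (u : ℝ) : ℝ :=
  ((Real.log u)^3 + 3*(Real.log u)^2 + 6*Real.log u + 6)/(2*u)
    - ((Real.log u)^3/2 + 3*(Real.log u)^2/4 + 3*(Real.log u)/4 + 3/8)/u^2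

def Ffun (r : ℝ) : ℝ := Hfun (1 + r^2)

def gfun (y : ℝ) : ℝ := y * (((y^2 - 1)/(1 + y^2)^3) * (-Real.log (1 + y^2))^3)

lemma hasDerivAt_F (r : ℝ) : HasDerivAt Ffun (gfun r) r := by
  have hu : (0:ℝ) < 1 + r^2 := by positivity
  have h1 : HasDerivAt (fun r : ℝ => 1 + r^2) (2*r) r := by
    simpa using (hasDerivAt_pow 2 r).const_add 1
  have hL : HasDerivAt (fun r : ℝ => Real.log (1 + r^2)) (2*r/(1+r^2)) r := h1.log hu.ne'
  set L := Real.log (1 + r^2) with hLdef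
  have hN1 : HasDerivAt (fun r : ℝ => (Real.log (1+r^2))^3 + 3*(Real.log (1+r^2))^2
      + 6*Real.log (1+r^2) + 6)
      (3*L^2*(2*r/(1+r^2)) + 3*(2*L*(2*r/(1+r^2))) + 6*(2*r/(1+r^2))) r := by
    have := (((hL.pow 3).add (((hL.pow 2)).const_mul 3)).add (hL.const_mul 6)).add_const 6
    refine this.congr_deriv ?_
    ring
  have hN2 : HasDerivAt (fun r : ℝ => (Real.log (1+r^2))^3/2 + 3*(Real.log (1+r^2))^2/4
      + 3*(Real.log (1+r^2))/4 + 3/8)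
      (3*L^2*(2*r/(1+r^2))/2 + 3*(2*L*(2*r/(1+r^2)))/4 + 3*(2*r/(1+r^2))/4) r := by
    have := (((hL.pow 3).div_const 2).add (((hL.pow 2).const_mul 3).div_const 4)).add
      ((hL.const_mul 3).div_const 4) |>.add_const (3/8)
    refine this.congr_deriv ?_
    ring
  have hD1 : HasDerivAt (fun r : ℝ => 2*(1+r^2)) (2*(2*r)) r := h1.const_mul 2
  have hD2 : HasDerivAt (fun r : ℝ => (1+r^2)^2) (2*(1+r^2)*(2*r)) r := by
    have := (h1.pow 2)
    refine this.congr_deriv ?_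
    ring
  have hd1 : (2*(1+r^2)) ≠ 0 := by positivity
  have hd2 : ((1+r^2)^2) ≠ 0 := by positivity
  have := (hN1.div hD1 hd1).sub (hN2.div hD2 hd2)
  refine this.congr_deriv ?_
  rw [gfun]
  field_simp
  ring

lemma tendsto_F : Tendsto Ffun atTop (𝓝 0) := by
  have hu : Tendsto (fun r : ℝ => 1 + r^2) atTop atTop :=
    tendsto_atTop_add_const_left _ 1 (tendsto_pow_atTop two_ne_zero)
  have base : ∀ k : ℕ, Tendsto (fun u : ℝ => (Real.log u)^k / u) atTop (𝓝 0) := by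
    intro k
    simpa using Real.tendsto_pow_log_div_mul_add_atTop 1 0 k one_ne_zero
  have hinv : Tendsto (fun u : ℝ => 1/u) atTop (𝓝 (0:ℝ)) := by
    simpa using tendsto_inv_atTop_zero
  have hH : Tendsto Hfun atTop (𝓝 0) := by
    have e : (fun u : ℝ =>
        ((Real.log u)^3/u + 3*((Real.log u)^2/u) + 6*((Real.log u)^1/u) + 6*(1/u))/2
        - (((Real.log u)^3/u)*(1/u)/2 + 3*(((Real.log u)^2/u)*(1/u))/4
            + 3*(((Real.log u)^1/u)*(1/u))/4 + 3*((1/u)*(1/u))/8)) =ᶠ[atTop] Hfun := by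
      filter_upwards [eventually_gt_atTop (0:ℝ)] with u hu0
      rw [Hfun]
      field_simp
    have : Tendsto (fun u : ℝ =>
        ((Real.log u)^3/u + 3*((Real.log u)^2/u) + 6*((Real.log u)^1/u) + 6*(1/u))/2
        - (((Real.log u)^3/u)*(1/u)/2 + 3*(((Real.log u)^2/u)*(1/u))/4
            + 3*(((Real.log u)^1/u)*(1/u))/4 + 3*((1/u)*(1/u))/8)) atTop (𝓝 0) := by
      have := ((((base 3).add ((base 2).const_mul 3)).add ((base 1).const_mul 6)).add
        (hinv.const_mul 6)).div_const 2 |>.sub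
        (((((base 3).mul hinv).div_const 2).add (((base 2).mul hinv).const_mul 3 |>.div_const 4)).add
          (((base 1).mul hinv).const_mul 3 |>.div_const 4) |>.add
          (((hinv.mul hinv).const_mul 3).div_const 8))
      convert this using 2 <;> norm_num
    exact this.congr' e
  exact hH.comp hu

lemma F_zero : Ffun 0 = 21/8 := by
  simp [Ffun, Hfun]
  norm_num

lemma F_one : Ffun 1 = Hfun 2 := by norm_num [Ffun]

lemma cont_g : Continuous gfun := by
  apply continuous_id.mul
  apply Continuous.mul
  · exact ((continuous_pow 2).sub continuous_const).div
      (by continuity) (fun y => by positivity)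
  · exact (((continuous_const.add (continuous_pow 2)).log (fun y => (by positivity : (1:ℝ) + y^2 ≠ 0))).neg).pow 3

lemma g_nonpos {r : ℝ} (hr : r ∈ Ioi (1:ℝ)) : gfun r ≤ 0 := by
  have hr1 : (1:ℝ) < r := hr
  have hL : 0 ≤ Real.log (1 + r^2) := Real.log_nonneg (by nlinarith)
  have : gfun r = -(r * (r^2-1) * (Real.log (1+r^2))^3 / (1+r^2)^3) := by
    rw [gfun]; ring
  rw [this, neg_nonpos]
  apply div_nonneg _ (by positivity)
  have : (0:ℝ) ≤ r := by linarith
  apply mul_nonneg (mul_nonneg this (by nlinarith)) (by positivity)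

lemma intOn_g : IntegrableOn gfun (Ioi (0:ℝ)) := by
  have h1 : IntegrableOn gfun (Ioc (0:ℝ) 1) := cont_g.integrableOn_Ioc
  have h2 : IntegrableOn gfun (Ioi (1:ℝ)) :=
    integrableOn_Ioi_deriv_of_nonpos
      ((hasDerivAt_F 1).continuousAt.continuousWithinAt)
      (fun x _ => hasDerivAt_F x) (fun x hx => g_nonpos hx) tendsto_F
  have := h1.union h2
  rwa [Ioc_union_Ioi_eq_Ioi zero_le_one] at this

lemma integral_g : ∫ y in Ioi (0:ℝ), gfun y = -(21/8) := by
  have := integral_Ioi_of_hasDerivAt_of_tendsto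
    ((hasDerivAt_F 0).continuousAt.continuousWithinAt)
    (fun x _ => hasDerivAt_F x) intOn_g tendsto_F
  rw [this, F_zero]
  norm_num


lemma ball_vol : (volume (Metric.ball (0:E2) 1)).toReal = π := by
  rw [EuclideanSpace.volume_ball]
  have h2 : Real.Gamma ((Fintype.card (Fin 2) : ℝ) / 2 + 1) = 1 := by
    norm_num [Real.Gamma_two]
  norm_num [h2, Real.sq_sqrt Real.pi_nonneg, ENNReal.toReal_ofReal Real.pi_nonneg]

lemma main' :
    (∫ x : E2, ((‖x‖^2 - 1)/(1 + ‖x‖^2)^3) * (-Real.log (1 + ‖x‖^2))^3)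
      = -(21 * Real.pi / 4) := by
  have h := MeasureTheory.integral_fun_norm_addHaar (volume : Measure E2)
    (fun y : ℝ => ((y^2 - 1)/(1 + y^2)^3) * (-Real.log (1 + y^2))^3)
  simp only [finrank_euclideanSpace, Fintype.card_fin] at h
  rw [h, measureReal_def, ball_vol]
  have : ∫ y in Ioi (0:ℝ), y ^ (2-1) • (((y^2 - 1)/(1 + y^2)^3) * (-Real.log (1 + y^2))^3)
      = -(21/8) := by
    rw [← integral_g]
    apply setIntegral_congr_fun measurableSet_Ioi
    intro y _
    simp [gfun]
  rw [this]
  simp only [nsmul_eq_mul, smul_eq_mul]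
  ring

theorem stmt6 :
    (∫ x : E2, ((‖x‖^2 - 1)/(1 + ‖x‖^2)^3) * (eta0 x)^3) = -(21 * Real.pi / 4) := by
  simp only [eta0]
  exact main'
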